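/- Let 0 < α < 2 < β and let A, C, D > 0 and B ∈ ℝ. Define s(λ) = Aλ² + B − Cλ^α − Dλ^β. If s'(1) = 0 and s''(1) ≤ 0, then s'''(λ) < 0 for all λ > 1, s''(λ) < 0 for all λ > 1, s'(λ) < 0 for all λ > 1, and s(λ) < s(1) for all λ > 1. -/

import Mathlib

open Set Filter

theorem scaling_action_derivatives (α β A B C D : ℝ)
    (hα : 0 < α) (hα2 : α < 2) (hβ : 2 < β)
    (hA : 0 < A) (hC : 0 < C) (hD : 0 < D)
    (s : ℝ → ℝ)
    (hs : s = fun lam : ℝ => A * lam ^ (2:ℝ) + B - C * lam ^ α - D * lam ^ β)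
    (hs1 : deriv s 1 = 0) (hs2 : deriv (deriv s) 1 ≤ 0) :
    (∀ lam : ℝ, 1 < lam → deriv (deriv (deriv s)) lam < 0) ∧
    (∀ lam : ℝ, 1 < lam → deriv (deriv s) lam < 0) ∧
    (∀ lam : ℝ, 1 < lam → deriv s lam < 0) ∧
    (∀ lam : ℝ, 1 < lam → s lam < s 1) := by
  set f1 : ℝ → ℝ := fun x => 2*A*x - α*C*x^(α-1) - β*D*x^(β-1) with hf1
  set f2 : ℝ → ℝ := fun x => 2*A - α*(α-1)*C*x^(α-2) - β*(β-1)*D*x^(β-2) with hf2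
  set f3 : ℝ → ℝ := fun x => -(α*(α-1)*(α-2)*C*x^(α-3)) - β*(β-1)*(β-2)*D*x^(β-3) with hf3
  have hd1 : ∀ x : ℝ, 0 < x → HasDerivAt s (f1 x) x := by
    intro x hx
    rw [hs]
    have h2 : HasDerivAt (fun y : ℝ => y ^ (2:ℝ)) (2 * x ^ ((2:ℝ)-1)) x :=
      Real.hasDerivAt_rpow_const (Or.inl hx.ne')
    have ha : HasDerivAt (fun y : ℝ => y ^ α) (α * x ^ (α-1)) x :=
      Real.hasDerivAt_rpow_const (Or.inl hx.ne')
    have hb : HasDerivAt (fun y : ℝ => y ^ β) (β * x ^ (β-1)) x :=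
      Real.hasDerivAt_rpow_const (Or.inl hx.ne')
    have := (((h2.const_mul A).add_const B).sub (ha.const_mul C)).sub (hb.const_mul D)
    refine this.congr_deriv ?_
    have : ((2:ℝ)-1) = (1:ℝ) := by norm_num
    rw [this, Real.rpow_one]
    ring
  have hd2 : ∀ x : ℝ, 0 < x → HasDerivAt f1 (f2 x) x := by
    intro x hx
    have hid : HasDerivAt (fun y : ℝ => 2*A*y) (2*A) x := by
      simpa using (hasDerivAt_id x).const_mul (2*A)
    have ha : HasDerivAt (fun y : ℝ => y ^ (α-1)) ((α-1) * x ^ (α-1-1)) x :=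
      Real.hasDerivAt_rpow_const (Or.inl hx.ne')
    have hb : HasDerivAt (fun y : ℝ => y ^ (β-1)) ((β-1) * x ^ (β-1-1)) x :=
      Real.hasDerivAt_rpow_const (Or.inl hx.ne')
    have := (hid.sub (ha.const_mul (α*C))).sub (hb.const_mul (β*D))
    refine this.congr_deriv ?_
    rw [show α-1-1 = α-2 by ring, show β-1-1 = β-2 by ring]; ring
  have hd3 : ∀ x : ℝ, 0 < x → HasDerivAt f2 (f3 x) x := by
    intro x hx
    have ha : HasDerivAt (fun y : ℝ => y ^ (α-2)) ((α-2) * x ^ (α-2-1)) x :=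
      Real.hasDerivAt_rpow_const (Or.inl hx.ne')
    have hb : HasDerivAt (fun y : ℝ => y ^ (β-2)) ((β-2) * x ^ (β-2-1)) x :=
      Real.hasDerivAt_rpow_const (Or.inl hx.ne')
    have := ((hasDerivAt_const x (2*A)).sub (ha.const_mul (α*(α-1)*C))).sub
      (hb.const_mul (β*(β-1)*D))
    refine this.congr_deriv ?_
    rw [show α-2-1 = α-3 by ring, show β-2-1 = β-3 by ring]; ring
  have e1 : ∀ x : ℝ, 0 < x → deriv s x = f1 x := fun x hx => (hd1 x hx).deriv
  have e1' : ∀ x : ℝ, 0 < x → deriv s =ᶠ[nhds x] f1 := fun x hx =>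
    Filter.eventuallyEq_of_mem (isOpen_Ioi.mem_nhds hx) (fun y hy => e1 y hy)
  have e2 : ∀ x : ℝ, 0 < x → deriv (deriv s) x = f2 x := by
    intro x hx
    rw [(e1' x hx).deriv_eq]
    exact (hd2 x hx).deriv
  have e2' : ∀ x : ℝ, 0 < x → deriv (deriv s) =ᶠ[nhds x] f2 := fun x hx =>
    Filter.eventuallyEq_of_mem (isOpen_Ioi.mem_nhds hx) (fun y hy => e2 y hy)
  have e3 : ∀ x : ℝ, 0 < x → deriv (deriv (deriv s)) x = f3 x := by
    intro x hx
    rw [(e2' x hx).deriv_eq]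
    exact (hd3 x hx).deriv
  -- clean data at 1
  have h1A : 2*A = α*C + β*D := by
    have := hs1
    rw [e1 1 one_pos] at this
    simp [hf1, Real.one_rpow] at this
    linarith
  have h2key : α*(2-α)*C ≤ β*(β-2)*D := by
    have := hs2
    rw [e2 1 one_pos] at this
    simp [hf2, Real.one_rpow] at this
    nlinarith
  -- the third derivative inequality
  have key3 : ∀ lam : ℝ, 1 < lam → f3 lam < 0 := by
    intro lam hl
    have hl0 : (0:ℝ) < lam := lt_trans one_pos hl
    have hpa : (0:ℝ) < lam ^ (α-3) := Real.rpow_pos_of_pos hl0 _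
    have hpb : (0:ℝ) < lam ^ (β-3) := Real.rpow_pos_of_pos hl0 _
    have hmono : lam ^ (α-3) < lam ^ (β-3) :=
      (Real.rpow_lt_rpow_left_iff hl).mpr (by linarith)
    have step1 : α*(α-1)*(2-α)*C * lam ^ (α-3) ≤ α*(2-α)*C * lam ^ (α-3) := by
      have ht : (0:ℝ) < α*(2-α)*C := mul_pos (mul_pos hα (by linarith)) hC
      have : α*(α-1)*(2-α)*C ≤ α*(2-α)*C := by nlinarith [mul_pos ht (show (0:ℝ) < 2-α by linarith)]
      exact mul_le_mul_of_nonneg_right this hpa.le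
    have step2 : α*(2-α)*C * lam ^ (α-3) ≤ β*(β-2)*D * lam ^ (α-3) :=
      mul_le_mul_of_nonneg_right h2key hpa.le
    have step3 : β*(β-2)*D * lam ^ (α-3) < β*(β-2)*D * lam ^ (β-3) := by
      have hpos : (0:ℝ) < β*(β-2)*D := mul_pos (mul_pos (by linarith) (by linarith)) hD
      exact mul_lt_mul_of_pos_left hmono hpos
    have step4 : β*(β-2)*D * lam ^ (β-3) ≤ β*(β-1)*(β-2)*D * lam ^ (β-3) := by
      have hpos : (0:ℝ) < β*(β-2)*D := mul_pos (mul_pos (by linarith) (by linarith)) hD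
      have : β*(β-2)*D ≤ β*(β-1)*(β-2)*D := by nlinarith [mul_pos hpos (show (0:ℝ) < β-2 by linarith)]
      exact mul_le_mul_of_nonneg_right this hpb.le
    have : α*(α-1)*(2-α)*C * lam ^ (α-3) < β*(β-1)*(β-2)*D * lam ^ (β-3) := by
      calc α*(α-1)*(2-α)*C * lam ^ (α-3) ≤ α*(2-α)*C * lam ^ (α-3) := step1
        _ ≤ β*(β-2)*D * lam ^ (α-3) := step2
        _ < β*(β-2)*D * lam ^ (β-3) := step3
        _ ≤ β*(β-1)*(β-2)*D * lam ^ (β-3) := step4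
    simp only [hf3]
    nlinarith [this]
  have part1 : ∀ lam : ℝ, 1 < lam → deriv (deriv (deriv s)) lam < 0 := by
    intro lam hl
    rw [e3 lam (lt_trans one_pos hl)]
    exact key3 lam hl
  -- second derivative negative via strict antitonicity
  have anti2 : StrictAntiOn (deriv (deriv s)) (Ici 1) := by
    apply strictAntiOn_of_deriv_neg (convex_Ici 1)
    · intro x hx
      have hx0 : (0:ℝ) < x := lt_of_lt_of_le one_pos hx
      exact ((hd3 x hx0).continuousAt.congr (e2' x hx0).symm).continuousWithinAt
    · intro x hx
      rw [interior_Ici] at hx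
      have hx0 : (0:ℝ) < x := lt_trans one_pos hx
      rw [(e2' x hx0).deriv_eq, (hd3 x hx0).deriv]
      exact key3 x hx
  have part2 : ∀ lam : ℝ, 1 < lam → deriv (deriv s) lam < 0 := by
    intro lam hl
    have := anti2 (le_refl (1:ℝ)) (le_of_lt hl : (1:ℝ) ≤ lam) hl
    linarith
  have anti1 : StrictAntiOn (deriv s) (Ici 1) := by
    apply strictAntiOn_of_deriv_neg (convex_Ici 1)
    · intro x hx
      have hx0 : (0:ℝ) < x := lt_of_lt_of_le one_pos hx
      exact ((hd2 x hx0).continuousAt.congr (e1' x hx0).symm).continuousWithinAt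
    · intro x hx
      rw [interior_Ici] at hx
      exact part2 x hx
  have part3 : ∀ lam : ℝ, 1 < lam → deriv s lam < 0 := by
    intro lam hl
    have := anti1 (le_refl (1:ℝ)) (le_of_lt hl : (1:ℝ) ≤ lam) hl
    linarith [hs1]
  have anti0 : StrictAntiOn s (Ici 1) := by
    apply strictAntiOn_of_deriv_neg (convex_Ici 1)
    · intro x hx
      have hx0 : (0:ℝ) < x := lt_of_lt_of_le one_pos hx
      exact (hd1 x hx0).continuousAt.continuousWithinAt
    · intro x hx
      rw [interior_Ici] at hx
      exact part3 x hx
  exact ⟨part1, part2, part3, fun lam hl => anti0 (le_refl (1:ℝ)) (le_of_lt hl) hl⟩
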